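/- For any two integrable functions f, g : [0,1] → ℝ, the vertical-shift-invariant L₁ distance D₁↕(f,g) = min over α ∈ ℝ of ∫₀¹ |f(x) + α - g(x)| dx satisfies D₁↕(f,g) ≤ L₁(f̂, ĝ) ≤ 2·D₁↕(f,g), where f̂(x) = f(x) - ∫₀¹ f(t) dt is the mean-reduction of f. -/

import Mathlib

open MeasureTheory

/-- The mean-reduction reduces the vertical-shift-invariant `L₁` distance `D₁↕` to `L₁`
within a factor of `2`: `D₁↕(f,g) ≤ L₁(f̂, ĝ) ≤ 2 · D₁↕(f,g)`. -/
theorem stmt1 (f g : ℝ → ℝ)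
    (hf : IntegrableOn f (Set.Icc 0 1)) (hg : IntegrableOn g (Set.Icc 0 1)) :
    (⨅ α : ℝ, ∫ x in Set.Icc (0:ℝ) 1, |f x + α - g x|) ≤
      (∫ x in Set.Icc (0:ℝ) 1,
        |(f x - ∫ t in Set.Icc (0:ℝ) 1, f t) - (g x - ∫ t in Set.Icc (0:ℝ) 1, g t)|) ∧
    (∫ x in Set.Icc (0:ℝ) 1,
        |(f x - ∫ t in Set.Icc (0:ℝ) 1, f t) - (g x - ∫ t in Set.Icc (0:ℝ) 1, g t)|) ≤
      2 * ⨅ α : ℝ, ∫ x in Set.Icc (0:ℝ) 1, |f x + α - g x| := by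
  have hvol : volume (Set.Icc (0:ℝ) 1) = 1 := by simp [Real.volume_Icc]
  have hvolR : (volume (Set.Icc (0:ℝ) 1)).toReal = 1 := by simp [hvol]
  set F : ℝ := ∫ t in Set.Icc (0:ℝ) 1, f t with hF
  set G : ℝ := ∫ t in Set.Icc (0:ℝ) 1, g t with hG
  have hbdd : BddBelow (Set.range fun α : ℝ => ∫ x in Set.Icc (0:ℝ) 1, |f x + α - g x|) := by
    refine ⟨0, ?_⟩
    rintro _ ⟨α, rfl⟩
    exact integral_nonneg fun x => abs_nonneg _
  have hconst : ∀ α : ℝ, IntegrableOn (fun _ : ℝ => α) (Set.Icc 0 1) :=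
    fun α => integrableOn_const (by simp [hvol])
  have hInt : ∀ α : ℝ, IntegrableOn (fun x => f x + α - g x) (Set.Icc 0 1) :=
    fun α => (hf.add (hconst α)).sub hg
  have key : ∀ α : ℝ,
      (∫ x in Set.Icc (0:ℝ) 1, |(f x - F) - (g x - G)|) ≤
        2 * ∫ x in Set.Icc (0:ℝ) 1, |f x + α - g x| := by
    intro α
    set h : ℝ → ℝ := fun x => f x + α - g x with hh
    have hmean : (∫ x in Set.Icc (0:ℝ) 1, h x) = F + α - G := by
      have h1 : (∫ x in Set.Icc (0:ℝ) 1, h x)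
          = (∫ x in Set.Icc (0:ℝ) 1, (f x + α)) - ∫ x in Set.Icc (0:ℝ) 1, g x :=
        integral_sub (hf.add (hconst α)) hg
      have h2 : (∫ x in Set.Icc (0:ℝ) 1, (f x + α))
          = (∫ x in Set.Icc (0:ℝ) 1, f x) + ∫ x in Set.Icc (0:ℝ) 1, (α : ℝ) :=
        integral_add hf (hconst α)
      rw [h1, h2]
      simp [hvolR, F, G]
    set c : ℝ := F + α - G with hc
    have hpt : ∀ x, |(f x - F) - (g x - G)| = |h x - c| := by
      intro x; congr 1; simp only [hh, hc]; ring
    calc (∫ x in Set.Icc (0:ℝ) 1, |(f x - F) - (g x - G)|)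
        = ∫ x in Set.Icc (0:ℝ) 1, |h x - c| := by simp only [hpt]
      _ ≤ ∫ x in Set.Icc (0:ℝ) 1, (|h x| + |c|) := by
          apply integral_mono ((hInt α).sub (hconst c)).abs
            (((hInt α).abs).add (hconst |c|))
          intro x
          exact (abs_sub _ _)
      _ = (∫ x in Set.Icc (0:ℝ) 1, |h x|) + |c| := by
          rw [integral_add ((hInt α).abs) (hconst |c|)]
          simp [hvolR]
          rfl
      _ ≤ (∫ x in Set.Icc (0:ℝ) 1, |h x|) + ∫ x in Set.Icc (0:ℝ) 1, |h x| := by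
          gcongr
          rw [← hmean]
          exact norm_integral_le_integral_norm h
      _ = 2 * ∫ x in Set.Icc (0:ℝ) 1, |h x| := by ring
  constructor
  · have := ciInf_le hbdd (G - F)
    refine this.trans_eq ?_
    congr 1; ext x; congr 1; ring
  · rw [show (2:ℝ) * (⨅ α : ℝ, ∫ x in Set.Icc (0:ℝ) 1, |f x + α - g x|)
        = ((⨅ α : ℝ, ∫ x in Set.Icc (0:ℝ) 1, |f x + α - g x|)) * 2 from mul_comm _ _,
      ← div_le_iff₀ (by norm_num : (0:ℝ) < 2)]
    apply le_ciInf
    intro α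
    rw [div_le_iff₀ (by norm_num : (0:ℝ) < 2), mul_comm]
    exact key α
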